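/- If I1, I2, I3 are pairwise distinct positive reals, then the discrete Euler map (with real variables) has no periodic point of exact period 2: there is no real (x1,x2,x3) with well-defined image such that the second iterate equals (x1,x2,x3) but the map does not fix (x1,x2,x3). -/

import Mathlib

/-- The denominator of the discrete Euler map. -/
noncomputable def eulerD (I1 I2 I3 : ℝ) (p : ℝ × ℝ × ℝ) : ℝ :=
  let a1 : ℝ := (I2 - I3) / (2 * I1)
  let a2 : ℝ := (I3 - I1) / (2 * I2)
  let a3 : ℝ := (I1 - I2) / (2 * I3)
  1 - 2*a1*a2*a3*p.1*p.2.1*p.2.2 - a2*a3*p.1^2 - a3*a1*p.2.1^2 - a1*a2*p.2.2^2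

/-- The explicit discrete Euler map. -/
noncomputable def eulerMap (I1 I2 I3 : ℝ) (p : ℝ × ℝ × ℝ) : ℝ × ℝ × ℝ :=
  let a1 : ℝ := (I2 - I3) / (2 * I1)
  let a2 : ℝ := (I3 - I1) / (2 * I2)
  let a3 : ℝ := (I1 - I2) / (2 * I3)
  let D : ℝ := eulerD I1 I2 I3 p
  ((p.1*(1 - a2*a3*p.1^2 + a3*a1*p.2.1^2 + a1*a2*p.2.2^2) + 2*a1*p.2.1*p.2.2) / D,
   (p.2.1*(1 + a2*a3*p.1^2 - a3*a1*p.2.1^2 + a1*a2*p.2.2^2) + 2*a2*p.2.2*p.1) / D,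
   (p.2.2*(1 + a2*a3*p.1^2 + a3*a1*p.2.1^2 - a1*a2*p.2.2^2) + 2*a3*p.1*p.2.1) / D)

/-- The explicit Euler map satisfies the implicit Kahan-type relations
`X_i - x_i = a_i (X_j x_k + x_j X_k)`. -/
lemma euler_rels (I1 I2 I3 : ℝ) (p : ℝ × ℝ × ℝ)
    (hD : eulerD I1 I2 I3 p ≠ 0) :
    (eulerMap I1 I2 I3 p).1 - p.1 =
      (I2 - I3) / (2 * I1) *
        ((eulerMap I1 I2 I3 p).2.1 * p.2.2 + p.2.1 * (eulerMap I1 I2 I3 p).2.2) ∧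
    (eulerMap I1 I2 I3 p).2.1 - p.2.1 =
      (I3 - I1) / (2 * I2) *
        ((eulerMap I1 I2 I3 p).2.2 * p.1 + p.2.2 * (eulerMap I1 I2 I3 p).1) ∧
    (eulerMap I1 I2 I3 p).2.2 - p.2.2 =
      (I1 - I2) / (2 * I3) *
        ((eulerMap I1 I2 I3 p).1 * p.2.1 + p.1 * (eulerMap I1 I2 I3 p).2.1) := by
  obtain ⟨x1, x2, x3⟩ := p
  simp only [eulerMap, eulerD] at *
  set a1 : ℝ := (I2 - I3) / (2 * I1) with ha1
  set a2 : ℝ := (I3 - I1) / (2 * I2) with ha2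
  set a3 : ℝ := (I1 - I2) / (2 * I3) with ha3
  set D : ℝ := 1 - 2*a1*a2*a3*x1*x2*x3 - a2*a3*x1^2 - a3*a1*x2^2 - a1*a2*x3^2 with hDdef
  refine ⟨?_, ?_, ?_⟩ <;>
  · field_simp
    rw [hDdef]
    ring

/-- for pairwise distinct positive moments of inertia, the real
discrete Euler map has no periodic point of exact period 2. -/
theorem euler_top_no_period_two
    (I1 I2 I3 : ℝ)
    (hI1 : 0 < I1) (hI2 : 0 < I2) (hI3 : 0 < I3)
    (h12 : I1 ≠ I2) (h23 : I2 ≠ I3) (h31 : I3 ≠ I1) :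
    ¬ ∃ p : ℝ × ℝ × ℝ,
        eulerD I1 I2 I3 p ≠ 0 ∧
        eulerD I1 I2 I3 (eulerMap I1 I2 I3 p) ≠ 0 ∧
        eulerMap I1 I2 I3 (eulerMap I1 I2 I3 p) = p ∧
        eulerMap I1 I2 I3 p ≠ p := by
  rintro ⟨p, hD, hD2, h2, h1⟩
  obtain ⟨e1, e2, e3⟩ := euler_rels I1 I2 I3 p hD
  obtain ⟨f1, f2, f3⟩ := euler_rels I1 I2 I3 (eulerMap I1 I2 I3 p) hD2
  rw [h2] at f1 f2 f3
  set q := eulerMap I1 I2 I3 p with hq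
  -- adding the antisymmetric relations forces q = p
  have hq1 : q.1 = p.1 := by nlinarith [e1, f1]
  have hq2 : q.2.1 = p.2.1 := by nlinarith [e2, f2]
  have hq3 : q.2.2 = p.2.2 := by nlinarith [e3, f3]
  exact h1 (Prod.ext hq1 (Prod.ext hq2 hq3))
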